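/- Let s = (s₁,s₂,s₃) ∈ ℝ³ with s₁,s₂,s₃ > 0. Then the following are equivalent: (i) p_r(s) > 0 for all r = 1,2,3 and s₁,s₂,s₃ are pairwise distinct; (ii) there exists a = (a₁,a₂,a₃) ∈ ℝ³ such that M₂₄(s,a) is positive definite, s_{r+1} + s_{r+2} - s_r + 3S(s)/(2s_r) + 7a_r > 0 for all r, and a_r < a_r⁰(s) for all r. (This is the matrix-level statement that a homogeneous metric g_s on the octonionic flag manifold W²⁴ = F₄/Spin(8) has strongly positive curvature if and only if it has sec > 0 and does not submerge onto the Cayley projective plane, i.e. no two of the s_r are equal.) -/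

import Mathlib

open Matrix

/-- `S(s) = 2(s₁s₂+s₁s₃+s₂s₃) - (s₁²+s₂²+s₃²)`. -/
noncomputable def Spoly (s : Fin 3 → ℝ) : ℝ :=
  2 * (s 0 * s 1 + s 0 * s 2 + s 1 * s 2) - (s 0 ^ 2 + s 1 ^ 2 + s 2 ^ 2)

/-- `p_r(s) = (s_{r+1}-s_{r+2})² + 2 s_r (s_{r+1}+s_{r+2}) - 3 s_r²`, indices mod 3. -/
noncomputable def ppoly (s : Fin 3 → ℝ) (r : Fin 3) : ℝ :=
  (s (r + 1) - s (r + 2)) ^ 2 + 2 * s r * (s (r + 1) + s (r + 2)) - 3 * s r ^ 2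

/-- `a_r⁰(s) = ((s_{r+1}-s_{r+2})² - s_r²)/(2 s_r)`, indices mod 3. -/
noncomputable def a0 (s : Fin 3 → ℝ) (r : Fin 3) : ℝ :=
  ((s (r + 1) - s (r + 2)) ^ 2 - s r ^ 2) / (2 * s r)

/-- First block of the modified curvature operator of `(W²⁴, g_s)`. -/
noncomputable def M24 (s a : Fin 3 → ℝ) : Matrix (Fin 3) (Fin 3) ℝ :=
  !![4 * s 0,                   Spoly s / s 2 - 2 * a 2,  Spoly s / s 1 - 2 * a 1;
     Spoly s / s 2 - 2 * a 2,   4 * s 1,                  Spoly s / s 0 - 2 * a 0;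
     Spoly s / s 1 - 2 * a 1,   Spoly s / s 0 - 2 * a 0,  4 * s 2]

open Filter in
private lemma posDef3 {a b c x y z : ℝ} (ha : 0 < a) (h2 : 0 < a*b - z^2)
    (h3 : 0 < a*(b*c - x^2) - z*(z*c - x*y) + y*(z*x - b*y)) :
    (!![a, z, y; z, b, x; y, x, c] : Matrix (Fin 3) (Fin 3) ℝ).PosDef := by
  rw [Matrix.posDef_iff_dotProduct_mulVec]
  constructor
  · ext i j
    fin_cases i <;> fin_cases j <;> rfl
  · intro v hv
    have hq : star v ⬝ᵥ (!![a, z, y; z, b, x; y, x, c] : Matrix (Fin 3) (Fin 3) ℝ) *ᵥ v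
        = a*(v 0)^2 + b*(v 1)^2 + c*(v 2)^2 + 2*z*(v 0)*(v 1) + 2*y*(v 0)*(v 2)
          + 2*x*(v 1)*(v 2) := by
      simp [dotProduct, Matrix.mulVec, Fin.sum_univ_three]
      ring
    rw [hq]
    obtain ⟨i, hi⟩ := Function.ne_iff.mp hv
    simp only [Pi.zero_apply] at hi
    rcases eq_or_ne (v 2) 0 with h5 | h5
    · rcases eq_or_ne (v 1) 0 with h4 | h4
      · have h0 : v 0 ≠ 0 := by fin_cases i <;> simp_all
        have h0sq : 0 < (v 0)^2 := (sq_nonneg _).lt_of_ne (Ne.symm (pow_ne_zero 2 h0))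
        rw [h5, h4]
        nlinarith [mul_pos ha h0sq]
      · have h1sq : 0 < (v 1)^2 := (sq_nonneg _).lt_of_ne (Ne.symm (pow_ne_zero 2 h4))
        rw [h5]
        nlinarith [sq_nonneg (a*(v 0) + z*(v 1)), mul_pos h2 h1sq, ha]
    · have h2sq : 0 < (v 2)^2 := (sq_nonneg _).lt_of_ne (Ne.symm (pow_ne_zero 2 h5))
      have key : a * (a*b - z^2) * (a*(v 0)^2 + b*(v 1)^2 + c*(v 2)^2 + 2*z*(v 0)*(v 1)
          + 2*y*(v 0)*(v 2) + 2*x*(v 1)*(v 2))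
          = (a*b - z^2)*(a*(v 0) + z*(v 1) + y*(v 2))^2
            + ((a*b - z^2)*(v 1) + (a*x - z*y)*(v 2))^2
            + a*(a*(b*c - x^2) - z*(z*c - x*y) + y*(z*x - b*y))*(v 2)^2 := by ring
      have hpos : 0 < (a*b - z^2)*(a*(v 0) + z*(v 1) + y*(v 2))^2
            + ((a*b - z^2)*(v 1) + (a*x - z*y)*(v 2))^2
            + a*(a*(b*c - x^2) - z*(z*c - x*y) + y*(z*x - b*y))*(v 2)^2 := by
        have t1 := mul_nonneg h2.le (sq_nonneg (a*(v 0) + z*(v 1) + y*(v 2)))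
        have t2 := sq_nonneg ((a*b - z^2)*(v 1) + (a*x - z*y)*(v 2))
        have t3 := mul_pos (mul_pos ha h3) h2sq
        linarith
      nlinarith [key, hpos, mul_pos ha h2]


private noncomputable def gaux (x y z t : ℝ) : ℝ :=
  16*x*y*z^6*t - 16*x*y^2*z^4*t^3 - 48*x*y^2*z^5*t + 32*x*y^3*z^3*t^3 + 32*x*y^3*z^4*t - 16*x*y^4*z^2*t^3 + 32*x*y^4*z^3*t - 48*x*y^5*z^2*t + 16*x*y^6*z*t - 16*x^2*y*z^4*t^2 - 48*x^2*y*z^5*t + 16*x^2*y^2*z^2*t^4 + 16*x^2*y^2*z^3*t^2 + 16*x^2*y^2*z^4 + 64*x^2*y^2*z^4*t + 16*x^2*y^3*z^2*t^2 - 32*x^2*y^3*z^3 - 32*x^2*y^3*z^3*t - 16*x^2*y^4*z*t^2 + 16*x^2*y^4*z^2 + 64*x^2*y^4*z^2*t - 48*x^2*y^5*z*t + 32*x^3*y*z^3*t^2 - 16*x^3*y*z^4 + 48*x^3*y*z^4*t - 16*x^3*y^2*z^2*t + 32*x^3*y^2*z^2*t^2 - 16*x^3*y^2*z^3 - 48*x^3*y^2*z^3*t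 + 32*x^3*y^3*z*t^2 - 16*x^3*y^3*z^2 - 48*x^3*y^3*z^2*t - 16*x^3*y^4*z + 48*x^3*y^4*z*t - 16*x^4*y*z^2*t^2 + 48*x^4*y*z^3 - 16*x^4*y*z^3*t - 16*x^4*y^2*z*t^2 + 48*x^4*y^2*z^2 + 32*x^4*y^2*z^2*t + 48*x^4*y^3*z - 16*x^4*y^3*z*t - 48*x^5*y*z^2 - 48*x^5*y^2*z + 16*x^6*y*z

private lemma ev_lt {f : ℝ → ℝ} {C : ℝ} (hf : Continuous f) (h : f 0 < C) :
    ∀ᶠ t in nhdsWithin (0:ℝ) (Set.Ioi 0), f t < C :=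
  ((hf.tendsto 0).eventually_lt_const h).filter_mono nhdsWithin_le_nhds

private lemma ev_pos {f : ℝ → ℝ} (hf : Continuous f) (h : 0 < f 0) :
    ∀ᶠ t in nhdsWithin (0:ℝ) (Set.Ioi 0), 0 < f t :=
  ((hf.tendsto 0).eventually_const_lt h).filter_mono nhdsWithin_le_nhds

private lemma core (x y z : ℝ) (hx : 0 < x) (hy : 0 < y) (hz : 0 < z)
    (hpx : 0 < (y-z)^2 + 2*x*(y+z) - 3*x^2)
    (hpy : 0 < (z-x)^2 + 2*y*(z+x) - 3*y^2)
    (hpz : 0 < (x-y)^2 + 2*z*(x+y) - 3*z^2)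
    (hyz : y ≠ z)
    (hmed : 0 < (z-x)*(x-y)) :
    ∃ u v w : ℝ, 0 < u ∧ 0 < v ∧ 0 < w ∧
      7*x*u < 2*((y-z)^2 + 2*x*(y+z) - 3*x^2) ∧
      7*y*v < 2*((z-x)^2 + 2*y*(z+x) - 3*y^2) ∧
      7*z*w < 2*((x-y)^2 + 2*z*(x+y) - 3*z^2) ∧
      0 < 16*x^2*y*z - (2*(x*(y+z)-(y-z)^2) + 2*u*x)^2 ∧
      0 < 16*y^2*z*x - (2*(y*(z+x)-(z-x)^2) + 2*v*y)^2 ∧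
      0 < 16*z^2*x*y - (2*(z*(x+y)-(x-y)^2) + 2*w*z)^2 ∧
      0 < 64*x^3*y^3*z^3
          - 4*x*y^2*z^2*(2*(x*(y+z)-(y-z)^2) + 2*u*x)^2
          - 4*y*x^2*z^2*(2*(y*(z+x)-(z-x)^2) + 2*v*y)^2
          - 4*z*x^2*y^2*(2*(z*(x+y)-(x-y)^2) + 2*w*z)^2
          + 2*x*y*z*((2*(x*(y+z)-(y-z)^2) + 2*u*x)*((2*(y*(z+x)-(z-x)^2) + 2*v*y)*(2*(z*(x+y)-(x-y)^2) + 2*w*z))) := by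
  have hS : 0 < 2*(x*y+y*z+z*x) - x^2 - y^2 - z^2 := by nlinarith [hpx, hpy, hpz]
  have hyz2 : 0 < (y-z)^2 :=
    (sq_nonneg _).lt_of_ne (Ne.symm (pow_ne_zero 2 (sub_ne_zero.mpr hyz)))
  obtain ⟨hzx, hxy⟩ := mul_ne_zero_iff.mp hmed.ne'
  have hzx2 : 0 < (z-x)^2 := (sq_nonneg _).lt_of_ne (Ne.symm (pow_ne_zero 2 hzx))
  have hxy2 : 0 < (x-y)^2 := (sq_nonneg _).lt_of_ne (Ne.symm (pow_ne_zero 2 hxy))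
  have e1 : ∀ᶠ t in nhdsWithin (0:ℝ) (Set.Ioi 0),
      7*x*t < 2*((y-z)^2 + 2*x*(y+z) - 3*x^2) := by
    apply ev_lt (f := fun t => 7*x*t) (by fun_prop)
    simp only [mul_zero]
    linarith
  have e2 : ∀ᶠ t in nhdsWithin (0:ℝ) (Set.Ioi 0),
      7*y*t^2 < 2*((z-x)^2 + 2*y*(z+x) - 3*y^2) := by
    apply ev_lt (f := fun t => 7*y*t^2) (by fun_prop)
    norm_num
    linarith
  have e3 : ∀ᶠ t in nhdsWithin (0:ℝ) (Set.Ioi 0),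
      7*z*t^2 < 2*((x-y)^2 + 2*z*(x+y) - 3*z^2) := by
    apply ev_lt (f := fun t => 7*z*t^2) (by fun_prop)
    norm_num
    linarith
  have m1 : ∀ᶠ t in nhdsWithin (0:ℝ) (Set.Ioi 0),
      0 < 16*x^2*y*z - (2*(x*(y+z)-(y-z)^2) + 2*t*x)^2 := by
    apply ev_pos (f := fun t => 16*x^2*y*z - (2*(x*(y+z)-(y-z)^2) + 2*t*x)^2) (by fun_prop)
    norm_num
    nlinarith [mul_pos hS hyz2]
  have m2 : ∀ᶠ t in nhdsWithin (0:ℝ) (Set.Ioi 0),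
      0 < 16*y^2*z*x - (2*(y*(z+x)-(z-x)^2) + 2*t^2*y)^2 := by
    apply ev_pos (f := fun t => 16*y^2*z*x - (2*(y*(z+x)-(z-x)^2) + 2*t^2*y)^2) (by fun_prop)
    norm_num
    nlinarith [mul_pos hS hzx2]
  have m3 : ∀ᶠ t in nhdsWithin (0:ℝ) (Set.Ioi 0),
      0 < 16*z^2*x*y - (2*(z*(x+y)-(x-y)^2) + 2*t^2*z)^2 := by
    apply ev_pos (f := fun t => 16*z^2*x*y - (2*(z*(x+y)-(x-y)^2) + 2*t^2*z)^2) (by fun_prop)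
    norm_num
    nlinarith [mul_pos hS hxy2]
  have hg : ∀ᶠ t in nhdsWithin (0:ℝ) (Set.Ioi 0), 0 < gaux x y z t := by
    apply ev_pos (f := fun t => gaux x y z t) (by unfold gaux; fun_prop)
    have h0 : gaux x y z 0 = 16*(2*(x*y+y*z+z*x) - x^2 - y^2 - z^2)*((z-x)*(x-y))*(x^2*y*z) := by
      unfold gaux; ring
    rw [h0]
    have : 0 < x^2*y*z := by positivity
    exact mul_pos (mul_pos (by linarith) hmed) this
  have hself : ∀ᶠ t in nhdsWithin (0:ℝ) (Set.Ioi 0), 0 < t :=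
    eventually_mem_nhdsWithin
  obtain ⟨t, ht, he1, he2, he3, hm1, hm2, hm3, hgt⟩ :=
    (hself.and (e1.and (e2.and (e3.and (m1.and (m2.and (m3.and hg))))))).exists
  refine ⟨t, t^2, t^2, ht, by positivity, by positivity, he1, he2, he3, hm1, hm2, hm3, ?_⟩
  have hfac : 64*x^3*y^3*z^3
          - 4*x*y^2*z^2*(2*(x*(y+z)-(y-z)^2) + 2*t*x)^2
          - 4*y*x^2*z^2*(2*(y*(z+x)-(z-x)^2) + 2*t^2*y)^2
          - 4*z*x^2*y^2*(2*(z*(x+y)-(x-y)^2) + 2*t^2*z)^2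
          + 2*x*y*z*((2*(x*(y+z)-(y-z)^2) + 2*t*x)*((2*(y*(z+x)-(z-x)^2) + 2*t^2*y)*(2*(z*(x+y)-(x-y)^2) + 2*t^2*z)))
        = t * gaux x y z t := by
    unfold gaux; ring
  rw [hfac]
  exact mul_pos ht hgt

private lemma assemble (s : Fin 3 → ℝ) (hs0 : 0 < s 0) (hs1 : 0 < s 1) (hs2 : 0 < s 2)
    (e : Fin 3 → ℝ) (he : ∀ r, 0 < e r)
    (hb0 : 7*s 0*e 0 < 2*((s 1 - s 2)^2 + 2*s 0*(s 1 + s 2) - 3*(s 0)^2))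
    (hb1 : 7*s 1*e 1 < 2*((s 2 - s 0)^2 + 2*s 1*(s 2 + s 0) - 3*(s 1)^2))
    (hb2 : 7*s 2*e 2 < 2*((s 0 - s 1)^2 + 2*s 2*(s 0 + s 1) - 3*(s 2)^2))
    (hm0 : 0 < 16*(s 0)^2*(s 1)*(s 2) - (2*(s 0*(s 1 + s 2) - (s 1 - s 2)^2) + 2*e 0*s 0)^2)
    (hm1 : 0 < 16*(s 1)^2*(s 2)*(s 0) - (2*(s 1*(s 2 + s 0) - (s 2 - s 0)^2) + 2*e 1*s 1)^2)
    (hm2 : 0 < 16*(s 2)^2*(s 0)*(s 1) - (2*(s 2*(s 0 + s 1) - (s 0 - s 1)^2) + 2*e 2*s 2)^2)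
    (hdet : 0 < 64*(s 0)^3*(s 1)^3*(s 2)^3
          - 4*(s 0)*(s 1)^2*(s 2)^2*(2*(s 0*(s 1 + s 2) - (s 1 - s 2)^2) + 2*e 0*s 0)^2
          - 4*(s 1)*(s 0)^2*(s 2)^2*(2*(s 1*(s 2 + s 0) - (s 2 - s 0)^2) + 2*e 1*s 1)^2
          - 4*(s 2)*(s 0)^2*(s 1)^2*(2*(s 2*(s 0 + s 1) - (s 0 - s 1)^2) + 2*e 2*s 2)^2
          + 2*(s 0)*(s 1)*(s 2)*((2*(s 0*(s 1 + s 2) - (s 1 - s 2)^2) + 2*e 0*s 0)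
              *((2*(s 1*(s 2 + s 0) - (s 2 - s 0)^2) + 2*e 1*s 1)
                *(2*(s 2*(s 0 + s 1) - (s 0 - s 1)^2) + 2*e 2*s 2)))) :
    ∃ a : Fin 3 → ℝ, (M24 s a).PosDef ∧
        (∀ r, 0 < s (r + 1) + s (r + 2) - s r + 3 * Spoly s / (2 * s r) + 7 * a r) ∧
        (∀ r, a r < a0 s r) := by
  have h0 : s 0 ≠ 0 := hs0.ne'
  have h1 : s 1 ≠ 0 := hs1.ne'
  have h2 : s 2 ≠ 0 := hs2.ne'
  refine ⟨fun r => a0 s r - e r, ?_, ?_, ?_⟩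
  · have hX0 : Spoly s / s 0 - 2*(a0 s 0 - e 0)
        = (2*(s 0*(s 1 + s 2) - (s 1 - s 2)^2) + 2*e 0*s 0)/s 0 := by
      simp only [a0, Spoly, show ((0:Fin 3)+1) = 1 from rfl, show ((0:Fin 3)+2) = 2 from rfl]
      field_simp
      ring
    have hX1 : Spoly s / s 1 - 2*(a0 s 1 - e 1)
        = (2*(s 1*(s 2 + s 0) - (s 2 - s 0)^2) + 2*e 1*s 1)/s 1 := by
      simp only [a0, Spoly, show ((1:Fin 3)+1) = 2 from rfl, show ((1:Fin 3)+2) = 0 from rfl]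
      field_simp
      ring
    have hX2 : Spoly s / s 2 - 2*(a0 s 2 - e 2)
        = (2*(s 2*(s 0 + s 1) - (s 0 - s 1)^2) + 2*e 2*s 2)/s 2 := by
      simp only [a0, Spoly, show ((2:Fin 3)+1) = 0 from rfl, show ((2:Fin 3)+2) = 1 from rfl]
      field_simp
      ring
    show Matrix.PosDef _
    unfold M24
    rw [hX0, hX1, hX2]
    apply posDef3
    · linarith
    · refine lt_of_lt_of_eq (div_pos hm2 (show (0:ℝ) < (s 2)^2 by positivity)) ?_
      field_simp
      ring
    · refine lt_of_lt_of_eq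
        (div_pos hdet (show (0:ℝ) < ((s 0)*(s 1)*(s 2))^2 by positivity)) ?_
      field_simp
      ring
  · intro r
    fin_cases r
    · show (0:ℝ) < s 1 + s 2 - s 0 + 3*Spoly s/(2*s 0) + 7*(a0 s 0 - e 0)
      refine lt_of_lt_of_eq (div_pos (b := 2*s 0)
        (show (0:ℝ) < 4*((s 1 - s 2)^2 + 2*s 0*(s 1 + s 2) - 3*(s 0)^2) - 14*s 0*e 0
          by linarith) (by linarith)) ?_
      simp only [a0, Spoly, show ((0:Fin 3)+1) = 1 from rfl, show ((0:Fin 3)+2) = 2 from rfl]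
      field_simp
      ring
    · show (0:ℝ) < s 2 + s 0 - s 1 + 3*Spoly s/(2*s 1) + 7*(a0 s 1 - e 1)
      refine lt_of_lt_of_eq (div_pos (b := 2*s 1)
        (show (0:ℝ) < 4*((s 2 - s 0)^2 + 2*s 1*(s 2 + s 0) - 3*(s 1)^2) - 14*s 1*e 1
          by linarith) (by linarith)) ?_
      simp only [a0, Spoly, show ((1:Fin 3)+1) = 2 from rfl, show ((1:Fin 3)+2) = 0 from rfl]
      field_simp
      ring
    · show (0:ℝ) < s 0 + s 1 - s 2 + 3*Spoly s/(2*s 2) + 7*(a0 s 2 - e 2)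
      refine lt_of_lt_of_eq (div_pos (b := 2*s 2)
        (show (0:ℝ) < 4*((s 0 - s 1)^2 + 2*s 2*(s 0 + s 1) - 3*(s 2)^2) - 14*s 2*e 2
          by linarith) (by linarith)) ?_
      simp only [a0, Spoly, show ((2:Fin 3)+1) = 0 from rfl, show ((2:Fin 3)+2) = 1 from rfl]
      field_simp
      ring
  · intro r
    have := he r
    show a0 s r - e r < a0 s r
    linarith


set_option maxHeartbeats 1000000 in
theorem stronglyPos_W24_iff (s : Fin 3 → ℝ) (hs : ∀ r, 0 < s r) :
    ((∀ r, 0 < ppoly s r) ∧ s 0 ≠ s 1 ∧ s 0 ≠ s 2 ∧ s 1 ≠ s 2) ↔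
      ∃ a : Fin 3 → ℝ, (M24 s a).PosDef ∧
        (∀ r, 0 < s (r + 1) + s (r + 2) - s r + 3 * Spoly s / (2 * s r) + 7 * a r) ∧
        (∀ r, a r < a0 s r) := by
  have hs0 := hs 0
  have hs1 := hs 1
  have hs2 := hs 2
  constructor
  · rintro ⟨hp, h01, h02, h12⟩
    have hp0 := hp 0
    have hp1 := hp 1
    have hp2 := hp 2
    simp only [ppoly, show ((0:Fin 3)+1) = 1 from rfl, show ((0:Fin 3)+2) = 2 from rfl,
      show ((1:Fin 3)+1) = 2 from rfl, show ((1:Fin 3)+2) = 0 from rfl,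
      show ((2:Fin 3)+1) = 0 from rfl, show ((2:Fin 3)+2) = 1 from rfl] at hp0 hp1 hp2
    have hd0 : s 1 - s 2 ≠ 0 := sub_ne_zero.mpr h12
    have hd1 : s 2 - s 0 ≠ 0 := sub_ne_zero.mpr (Ne.symm h02)
    have hd2 : s 0 - s 1 ≠ 0 := sub_ne_zero.mpr h01
    have hmed : 0 < (s 2 - s 0)*(s 0 - s 1) ∨ 0 < (s 0 - s 1)*(s 1 - s 2)
        ∨ 0 < (s 1 - s 2)*(s 2 - s 0) := by
      by_contra hcon
      push_neg at hcon
      obtain ⟨c1, c2, c3⟩ := hcon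
      have hprod : (s 1 - s 2)*(s 2 - s 0)*(s 0 - s 1) ≠ 0 :=
        mul_ne_zero (mul_ne_zero hd0 hd1) hd2
      have hsq : 0 < ((s 1 - s 2)*(s 2 - s 0)*(s 0 - s 1))^2 :=
        (sq_nonneg _).lt_of_ne (Ne.symm (pow_ne_zero 2 hprod))
      nlinarith [hsq, c3, mul_nonneg (neg_nonneg.mpr c1) (neg_nonneg.mpr c2)]
    rcases hmed with hm | hm | hm
    · obtain ⟨u, v, w, hu, hv, hw, hc1, hc2, hc3, hn1, hn2, hn3, hdet⟩ :=
        core (s 0) (s 1) (s 2) hs0 hs1 hs2 hp0 hp1 hp2 h12 hm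
      refine assemble s hs0 hs1 hs2 ![u, v, w] ?_ ?_ ?_ ?_ ?_ ?_ ?_ ?_
      · intro r
        fin_cases r
        · simpa using hu
        · simpa using hv
        · simpa using hw
      all_goals simp only [Matrix.cons_val_zero, Matrix.cons_val_one, Matrix.head_cons,
        Matrix.cons_val_two, Matrix.tail_cons]
      · linarith [hc1]
      · linarith [hc2]
      · linarith [hc3]
      · linarith [hn1]
      · linarith [hn2]
      · linarith [hn3]
      · linarith [hdet]
    · obtain ⟨u, v, w, hu, hv, hw, hc1, hc2, hc3, hn1, hn2, hn3, hdet⟩ :=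
        core (s 1) (s 2) (s 0) hs1 hs2 hs0 hp1 hp2 hp0 (fun h => h02 h.symm) hm
      refine assemble s hs0 hs1 hs2 ![w, u, v] ?_ ?_ ?_ ?_ ?_ ?_ ?_ ?_
      · intro r
        fin_cases r
        · simpa using hw
        · simpa using hu
        · simpa using hv
      all_goals simp only [Matrix.cons_val_zero, Matrix.cons_val_one, Matrix.head_cons,
        Matrix.cons_val_two, Matrix.tail_cons]
      · linarith [hc3]
      · linarith [hc1]
      · linarith [hc2]
      · linarith [hn3]
      · linarith [hn1]
      · linarith [hn2]
      · linarith [hdet]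
    · obtain ⟨u, v, w, hu, hv, hw, hc1, hc2, hc3, hn1, hn2, hn3, hdet⟩ :=
        core (s 2) (s 0) (s 1) hs2 hs0 hs1 hp2 hp0 hp1 h01 hm
      refine assemble s hs0 hs1 hs2 ![v, w, u] ?_ ?_ ?_ ?_ ?_ ?_ ?_ ?_
      · intro r
        fin_cases r
        · simpa using hv
        · simpa using hw
        · simpa using hu
      all_goals simp only [Matrix.cons_val_zero, Matrix.cons_val_one, Matrix.head_cons,
        Matrix.cons_val_two, Matrix.tail_cons]
      · linarith [hc2]
      · linarith [hc3]
      · linarith [hc1]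
      · linarith [hn2]
      · linarith [hn3]
      · linarith [hn1]
      · linarith [hdet]
  · rintro ⟨a, hPD, hlin, ha0⟩
    have hA : ∀ r : Fin 3, a r * (2 * s r) < (s (r+1) - s (r+2))^2 - s r ^ 2 := by
      intro r
      exact (lt_div_iff₀ (by linarith [hs r] : (0:ℝ) < 2 * s r)).mp (ha0 r)
    have hA0 := hA 0
    have hA1 := hA 1
    have hA2 := hA 2
    simp only [show ((0:Fin 3)+1) = 1 from rfl, show ((0:Fin 3)+2) = 2 from rfl,
      show ((1:Fin 3)+1) = 2 from rfl, show ((1:Fin 3)+2) = 0 from rfl,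
      show ((2:Fin 3)+1) = 0 from rfl, show ((2:Fin 3)+2) = 1 from rfl] at hA0 hA1 hA2
    have hL : ∀ r : Fin 3, 0 < 2*s r*(s (r+1) + s (r+2) - s r) + 3*Spoly s + 14*s r*a r := by
      intro r
      have h := hlin r
      have heq : s (r+1) + s (r+2) - s r + 3*Spoly s/(2*s r) + 7*a r
          = (2*s r*(s (r+1) + s (r+2) - s r) + 3*Spoly s + 14*s r*a r)/(2*s r) := by
        have : s r ≠ 0 := (hs r).ne'
        field_simp
        ring
      rw [heq] at h
      have := (lt_div_iff₀ (by linarith [hs r] : (0:ℝ) < 2 * s r)).mp h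
      linarith
    have hL0 := hL 0
    have hL1 := hL 1
    have hL2 := hL 2
    simp only [Spoly, show ((0:Fin 3)+1) = 1 from rfl, show ((0:Fin 3)+2) = 2 from rfl,
      show ((1:Fin 3)+1) = 2 from rfl, show ((1:Fin 3)+2) = 0 from rfl,
      show ((2:Fin 3)+1) = 0 from rfl, show ((2:Fin 3)+2) = 1 from rfl] at hL0 hL1 hL2
    refine ⟨?_, ?_, ?_, ?_⟩
    · intro r
      fin_cases r
      · show (0:ℝ) < ppoly s 0
        simp only [ppoly, show ((0:Fin 3)+1) = 1 from rfl, show ((0:Fin 3)+2) = 2 from rfl]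
        linarith [hL0, hA0]
      · show (0:ℝ) < ppoly s 1
        simp only [ppoly, show ((1:Fin 3)+1) = 2 from rfl, show ((1:Fin 3)+2) = 0 from rfl]
        linarith [hL1, hA1]
      · show (0:ℝ) < ppoly s 2
        simp only [ppoly, show ((2:Fin 3)+1) = 0 from rfl, show ((2:Fin 3)+2) = 1 from rfl]
        linarith [hL2, hA2]
    · -- s 0 ≠ s 1
      intro heq
      have hv : (![1,-1,0] : Fin 3 → ℝ) ≠ 0 := by
        intro h
        have := congrFun h 0
        norm_num at this
      have hqval : star (![1,-1,0] : Fin 3 → ℝ) ⬝ᵥ (M24 s a) *ᵥ ![1,-1,0]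
          = 4*s 0 + 4*s 1 - 2*(Spoly s/s 2) + 4*a 2 := by
        simp [M24, dotProduct, Matrix.mulVec, Fin.sum_univ_three]
        ring
      have hq := hPD.dotProduct_mulVec_pos hv
      rw [hqval] at hq
      have hq2 : 0 < (4*s 0 + 4*s 1 - 2*(Spoly s/s 2) + 4*a 2) * s 2 := mul_pos hq hs2
      have hT : Spoly s/s 2 * s 2 = Spoly s := div_mul_cancel₀ _ hs2.ne'
      simp only [Spoly] at hT hq2
      rw [heq] at hq2 hT hA2
      linarith [hq2, hT, hA2]
    · -- s 0 ≠ s 2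
      intro heq
      have hv : (![1,0,-1] : Fin 3 → ℝ) ≠ 0 := by
        intro h
        have := congrFun h 0
        norm_num at this
      have hqval : star (![1,0,-1] : Fin 3 → ℝ) ⬝ᵥ (M24 s a) *ᵥ ![1,0,-1]
          = 4*s 0 + 4*s 2 - 2*(Spoly s/s 1) + 4*a 1 := by
        simp [M24, dotProduct, Matrix.mulVec, Fin.sum_univ_three]
        ring
      have hq := hPD.dotProduct_mulVec_pos hv
      rw [hqval] at hq
      have hq2 : 0 < (4*s 0 + 4*s 2 - 2*(Spoly s/s 1) + 4*a 1) * s 1 := mul_pos hq hs1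
      have hT : Spoly s/s 1 * s 1 = Spoly s := div_mul_cancel₀ _ hs1.ne'
      simp only [Spoly] at hT hq2
      rw [heq] at hq2 hT hA1
      linarith [hq2, hT, hA1]
    · -- s 1 ≠ s 2
      intro heq
      have hv : (![0,1,-1] : Fin 3 → ℝ) ≠ 0 := by
        intro h
        have := congrFun h 1
        norm_num at this
      have hqval : star (![0,1,-1] : Fin 3 → ℝ) ⬝ᵥ (M24 s a) *ᵥ ![0,1,-1]
          = 4*s 1 + 4*s 2 - 2*(Spoly s/s 0) + 4*a 0 := by
        simp [M24, dotProduct, Matrix.mulVec, Fin.sum_univ_three]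
        ring
      have hq := hPD.dotProduct_mulVec_pos hv
      rw [hqval] at hq
      have hq2 : 0 < (4*s 1 + 4*s 2 - 2*(Spoly s/s 0) + 4*a 0) * s 0 := mul_pos hq hs0
      have hT : Spoly s/s 0 * s 0 = Spoly s := div_mul_cancel₀ _ hs0.ne'
      simp only [Spoly] at hT hq2
      rw [heq] at hq2 hT hA0
      linarith [hq2, hT, hA0]
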